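/- Let R be a commutative ring, S a multiplicative subset with an element t ∈ S such that every s ∈ S divides t, and assume S is saturated. Then there exists a ∈ S such that ta is idempotent, R ≅ Rta × R(1−ta) as rings, and R_S ≅ R_{ta} ≅ Rta. -/

import Mathlib

/-- If `S` is saturated and `t ∈ S` is divisible by every element of `S`,
then there is `a ∈ S` with `t * a` idempotent, `R ≅ R/(1 - ta) × R/(ta)`
(i.e. `R ≅ Rta ⊕ R(1 - ta)`), and `R_S ≅ R_{ta} ≅ Rta`. -/
theorem stmt15 {R : Type*} [CommRing R] (S : Submonoid R)
    (hsat : ∀ a b : R, a * b ∈ S → a ∈ S ∧ b ∈ S)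
    (t : R) (ht : t ∈ S) (hmax : ∀ s ∈ S, s ∣ t) :
    ∃ a ∈ S, IsIdempotentElem (t * a) ∧
      Nonempty (R ≃+* (R ⧸ Ideal.span {1 - t * a}) × (R ⧸ Ideal.span ({t * a} : Set R))) ∧
      Nonempty (Localization S ≃+* Localization (Submonoid.powers (t * a))) ∧
      Nonempty (Localization S ≃+* R ⧸ Ideal.span {1 - t * a}) := by
  -- t² ∈ S divides t
  obtain ⟨a, hta⟩ := hmax (t * t) (S.mul_mem ht ht)
  -- t = t*t*a
  have haS : a ∈ S := (hsat t a (by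
    refine (hsat t (t * a) ?_).2
    rw [show t * (t * a) = t * t * a by ring, ← hta]; exact ht)).2
  set e := t * a with he_def
  have heS : e ∈ S := S.mul_mem ht haS
  have hte : t * e = t := by rw [he_def, ← mul_assoc, ← hta]
  have he : IsIdempotentElem e := by
    show e * e = e
    rw [he_def]; calc t * a * (t * a) = (t * t * a) * a := by ring
      _ = t * a := by rw [← hta]
  refine ⟨a, haS, he, ?_, ?_, ?_⟩
  · -- R ≃ R⧸(1-e) × R⧸(e)
    have hcop : IsCoprime (Ideal.span {1 - e}) (Ideal.span ({e} : Set R)) := by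
      rw [Ideal.isCoprime_iff_sup_eq, eq_top_iff]
      intro x _
      have : (1 : R) ∈ Ideal.span {1 - e} ⊔ Ideal.span ({e} : Set R) := by
        have h1 : (1 - e) ∈ Ideal.span {1 - e} := Ideal.subset_span rfl
        have h2 : e ∈ Ideal.span ({e} : Set R) := Ideal.subset_span rfl
        have := Submodule.add_mem_sup h1 h2
        simpa using this
      simpa using Ideal.mul_mem_left _ x this
    have hinf : Ideal.span {1 - e} ⊓ Ideal.span ({e} : Set R) = ⊥ := by
      rw [eq_bot_iff]
      intro x hx
      rw [Submodule.mem_inf] at hx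
      obtain ⟨h1, h2⟩ := hx
      rw [Ideal.mem_span_singleton'] at h1 h2
      obtain ⟨c, hc⟩ := h1
      obtain ⟨d, hd⟩ := h2
      have hee := he
      unfold IsIdempotentElem at hee
      rw [Ideal.mem_bot]
      calc x = (c * (1 - e)) * e + (d * e) * (1 - e) := by rw [hc, hd]; ring
        _ = (c + d) * (e - e * e) := by ring
        _ = 0 := by rw [hee]; ring
    exact ⟨((RingEquiv.quotientBot R).symm.trans
      (Ideal.quotEquivOfEq hinf.symm)).trans
      (Ideal.quotientInfEquivQuotientProd _ _ hcop)⟩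
  · -- Localization S ≃ Localization (powers e)
    have hle : Submonoid.powers e ≤ S := Submonoid.powers_le.mpr heS
    have : IsLocalization S (Localization (Submonoid.powers e)) := by
      rw [isLocalization_iff]; refine ⟨?_, ?_, ?_⟩
      · rintro ⟨s, hs⟩
        obtain ⟨c, hc⟩ := hmax s hs
        have hse : s * (c * a) = e := by rw [he_def, ← mul_assoc, ← hc]
        have hu : IsUnit (algebraMap R (Localization (Submonoid.powers e)) s *
            algebraMap R (Localization (Submonoid.powers e)) (c * a)) := by
          rw [← map_mul, hse]
          exact IsLocalization.map_units _ ⟨e, Submonoid.mem_powers e⟩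
        exact isUnit_of_mul_isUnit_left hu
      · intro z
        obtain ⟨⟨r, s⟩, hz⟩ := IsLocalization.surj (Submonoid.powers e) z
        exact ⟨⟨r, ⟨s.1, hle s.2⟩⟩, hz⟩
      · intro x y h
        obtain ⟨c, hc⟩ := IsLocalization.exists_of_eq (M := Submonoid.powers e) h
        exact ⟨⟨c.1, hle c.2⟩, hc⟩
    exact ⟨IsLocalization.algEquiv S (Localization S)
      (Localization (Submonoid.powers e)) |>.toRingEquiv⟩
  · -- Localization S ≃ R⧸(1-e)
    have : IsLocalization S (R ⧸ Ideal.span {1 - e}) := by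
      rw [isLocalization_iff]; refine ⟨?_, ?_, ?_⟩
      · rintro ⟨s, hs⟩
        obtain ⟨c, hc⟩ := hmax s hs
        have hse : s * (c * a) = e := by rw [he_def, ← mul_assoc, ← hc]
        refine IsUnit.of_mul_eq_one (algebraMap R _ (c * a)) ?_
        rw [← map_mul, hse]
        have : (1 : R) - e ∈ Ideal.span {1 - e} := Ideal.subset_span rfl
        have h1 : algebraMap R (R ⧸ Ideal.span {1 - e}) (1 - e) = 0 :=
          Ideal.Quotient.eq_zero_iff_mem.mpr this
        rw [map_sub, map_one, sub_eq_zero] at h1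
        exact h1.symm
      · intro z
        obtain ⟨r, rfl⟩ := Ideal.Quotient.mk_surjective z
        exact ⟨⟨r, 1⟩, by simp⟩
      · intro x y h
        have : x - y ∈ Ideal.span {1 - e} := by
          rwa [← Ideal.Quotient.eq_zero_iff_mem, map_sub, sub_eq_zero]
        rw [Ideal.mem_span_singleton'] at this
        obtain ⟨c, hc⟩ := this
        refine ⟨⟨e, heS⟩, ?_⟩
        have hee := he
        unfold IsIdempotentElem at hee
        have h0 : e * (x - y) = 0 := by
          calc e * (x - y) = c * (e - e * e) := by rw [← hc]; ring
            _ = 0 := by rw [hee]; ring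
        show e * x = e * y
        linear_combination h0
    exact ⟨(IsLocalization.algEquiv S (Localization S)
      (R ⧸ Ideal.span {1 - e})).toRingEquiv⟩
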